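/- In the DLSR setup with stepsize μ > 0, decay factor β > 0, and true signal f_* : ℤ → E satisfying f_*^{(k)} ∈ W for all k and |f_*^{(k+1)}(u) − f_*^{(k)}(u)| ≤ Δ for all u and k, one has for every k ∈ ℤ: δ^{(k)} := ‖f^{(k)} − f^{(k−1)}‖ ≤ μ·((β + ‖T‖)(e^{(k−1)} + e_+^{(k−1)}) + η^{(k−1)}) + μ·|S|·τ̄·Δ, where ‖T‖ is the operator norm of T. -/

import Mathlib

open scoped RealInnerProductSpace BigOperators

theorem euclid_sum_apply {N : ℕ} {α : Type*} (s : Finset α)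
    (g : α → EuclideanSpace ℝ (Fin N)) (v : Fin N) :
    (∑ u ∈ s, g u) v = ∑ u ∈ s, g u v :=
  map_sum (EuclideanSpace.proj (𝕜 := ℝ) v) g s

theorem sum_single_eval {N : ℕ} (c : Fin N → ℝ) (v : Fin N) :
    (∑ w : Fin N, EuclideanSpace.single w (c w)) v = c v := by
  rw [euclid_sum_apply]
  simp [EuclideanSpace.single_apply]

theorem single_norm_bound {N : ℕ} (x : EuclideanSpace ℝ (Fin N)) (b : ℝ) (hb : 0 ≤ b)
    (c : Fin N → ℝ) (hc : ∀ v, |c v| ≤ b) :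
    ‖∑ w : Fin N, EuclideanSpace.single w (c w * x w)‖ ≤ b * ‖x‖ := by
  rw [EuclideanSpace.norm_eq]
  calc Real.sqrt (∑ v, ‖(∑ w : Fin N, EuclideanSpace.single w (c w * x w)) v‖ ^ 2)
      ≤ Real.sqrt (∑ v, b ^ 2 * ‖x v‖ ^ 2) := by
        apply Real.sqrt_le_sqrt
        apply Finset.sum_le_sum
        intro v _
        rw [sum_single_eval (fun w => c w * x w) v]
        have h1 : ‖c v * x v‖ = |c v| * ‖x v‖ := by simp [abs_mul]
        rw [h1, mul_pow]
        exact mul_le_mul_of_nonneg_right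
          (pow_le_pow_left₀ (abs_nonneg _) (hc v) 2) (by positivity)
    _ = b * ‖x‖ := by
        rw [← Finset.mul_sum, Real.sqrt_mul (by positivity), EuclideanSpace.norm_eq,
          Real.sqrt_sq hb]

/-- In the DLSR setup, the increment `δ^{(k)} = ‖f^{(k)} − f^{(k−1)}‖`
satisfies `δ^{(k)} ≤ μ((β + ‖T‖)(e^{(k−1)} + e_+^{(k−1)}) + η^{(k−1)}) + μ|S|τ̄Δ`. -/
theorem DLSR_delta_bound
    {N : ℕ} (W : Submodule ℝ (EuclideanSpace ℝ (Fin N)))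
    (S : Finset (Fin N)) (τ : Fin N → Fin N → ℕ) (τbar : ℕ)
    (hτ : ∀ u ∈ S, ∀ v : Fin N, 1 ≤ τ u v ∧ τ u v ≤ τbar)
    (T : EuclideanSpace ℝ (Fin N) →L[ℝ] EuclideanSpace ℝ (Fin N))
    (hT : ∀ g : EuclideanSpace ℝ (Fin N), T g =
      ∑ u ∈ S, g u • (Submodule.orthogonalProjectionOnto W (EuclideanSpace.single u (1 : ℝ)) :
        EuclideanSpace ℝ (Fin N)))
    (hTW : ∀ g ∈ W, T g ∈ W)
    (hTsa : ∀ g ∈ W, ∀ h ∈ W, ⟪T g, h⟫ = ⟪g, T h⟫)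
    (hTbnd : ∀ g ∈ W, 0 ≤ ⟪T g, g⟫ ∧ ⟪T g, g⟫ ≤ ‖g‖ ^ 2)
    (μ β Δ : ℝ) (hμ : 0 < μ) (hβ : 0 < β)
    (fstar : ℤ → EuclideanSpace ℝ (Fin N)) (hfstarW : ∀ k : ℤ, fstar k ∈ W)
    (hΔ : ∀ (k : ℤ) (u : Fin N), |fstar (k + 1) u - fstar k u| ≤ Δ)
    (f : ℤ → EuclideanSpace ℝ (Fin N))
    (hiter : ∀ (k : ℤ) (v : Fin N), f (k + 1) v =
      (1 - μ * β) * f k v +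
      μ * ∑ u ∈ S, (fstar (k - τ u v) u - f (k - τ u v) u) *
        (Submodule.orthogonalProjectionOnto W (EuclideanSpace.single u (1 : ℝ)) :
          EuclideanSpace ℝ (Fin N)) v)
    (ftil : ℤ → EuclideanSpace ℝ (Fin N))
    (hftil : ∀ k : ℤ, ftil k ∈ W ∧ β • ftil k + T (ftil k) = T (fstar k))
    (e ep η : ℤ → ℝ)
    (he : ∀ k : ℤ, e k =
      ‖(Submodule.orthogonalProjectionOnto W (f k - ftil k) : EuclideanSpace ℝ (Fin N))‖)
    (hep : ∀ k : ℤ, ep k =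
      ‖f k - (Submodule.orthogonalProjectionOnto W (f k) : EuclideanSpace ℝ (Fin N))‖)
    (hη : ∀ k : ℤ, η k = ‖∑ u ∈ S, ∑ v : Fin N, EuclideanSpace.single v
      ((f k u - f (k - τ u v) u) *
        (Submodule.orthogonalProjectionOnto W (EuclideanSpace.single u (1 : ℝ)) :
          EuclideanSpace ℝ (Fin N)) v)‖) :
    ∀ k : ℤ, ‖f k - f (k - 1)‖ ≤
      μ * ((β + ‖T‖) * (e (k - 1) + ep (k - 1)) + η (k - 1)) +
        μ * S.card * τbar * Δ := by
  intro k
  set m : ℤ := k - 1 with hm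
  -- telescoping bound on the drift of fstar
  have tele : ∀ (n : ℕ) (j : ℤ) (u : Fin N), |fstar (j - n) u - fstar j u| ≤ n * Δ := by
    intro n
    induction n with
    | zero => intro j u; simp
    | succ n ih =>
      intro j u
      have hstep : |fstar (j - (n : ℤ)) u - fstar (j - ((n : ℕ) + 1 : ℕ)) u| ≤ Δ := by
        have hcast : (j - ((n : ℕ) + 1 : ℕ) : ℤ) + 1 = j - (n : ℤ) := by push_cast; ring
        have := hΔ (j - ((n : ℕ) + 1 : ℕ)) u
        rwa [hcast] at this
      calc |fstar (j - ((n : ℕ) + 1 : ℕ)) u - fstar j u|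
          ≤ |fstar (j - ((n : ℕ) + 1 : ℕ)) u - fstar (j - (n : ℤ)) u|
            + |fstar (j - (n : ℤ)) u - fstar j u| := abs_sub_le _ _ _
        _ ≤ Δ + n * Δ := add_le_add (by rwa [abs_sub_comm]) (ih j u)
        _ = ((n : ℕ) + 1 : ℕ) * Δ := by push_cast; ring
  -- norm of projected basis vectors
  have hδnorm : ∀ u : Fin N,
      ‖(Submodule.orthogonalProjectionOnto W (EuclideanSpace.single u (1 : ℝ)) :
        EuclideanSpace ℝ (Fin N))‖ ≤ 1 := by
    intro u
    have h1 : ‖(Submodule.orthogonalProjectionOnto W (EuclideanSpace.single u (1 : ℝ)) :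
        EuclideanSpace ℝ (Fin N))‖ ≤ ‖Submodule.orthogonalProjectionOnto W‖ *
          ‖EuclideanSpace.single u (1 : ℝ)‖ :=
      (Submodule.orthogonalProjectionOnto W).le_opNorm _
    have h2 : ‖EuclideanSpace.single u (1 : ℝ)‖ = 1 := by
      rw [EuclideanSpace.norm_single]; norm_num
    have h3 := Submodule.orthogonalProjectionOnto_norm_le W
    nlinarith [norm_nonneg (EuclideanSpace.single u (1 : ℝ))]
  -- notation for vectors
  have hAeq : -(β • (f m - ftil m)) - T (f m - ftil m)
      = -(β • f m) + (T (fstar m) - T (f m)) := by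
    have hrel := (hftil m).2
    rw [map_sub, smul_sub, ← hrel]
    abel
  -- key decomposition
  have key : f k - f m = μ • ((-(β • (f m - ftil m)) - T (f m - ftil m))
      + (∑ u ∈ S, ∑ v : Fin N, EuclideanSpace.single v
          ((f m u - f (m - τ u v) u) *
            (Submodule.orthogonalProjectionOnto W (EuclideanSpace.single u (1 : ℝ)) :
              EuclideanSpace ℝ (Fin N)) v))
      + (∑ u ∈ S, ∑ v : Fin N, EuclideanSpace.single v
          ((fstar (m - τ u v) u - fstar m u) *
            (Submodule.orthogonalProjectionOnto W (EuclideanSpace.single u (1 : ℝ)) :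
              EuclideanSpace ℝ (Fin N)) v))) := by
    ext v
    have hit : f k v = (1 - μ * β) * f m v +
        μ * ∑ u ∈ S, (fstar (m - τ u v) u - f (m - τ u v) u) *
          (Submodule.orthogonalProjectionOnto W (EuclideanSpace.single u (1 : ℝ)) :
            EuclideanSpace ℝ (Fin N)) v := by
      have h := hiter m v
      rw [show m + 1 = k from by omega] at h
      exact h
    have hTsub : T (fstar m) - T (f m) = ∑ u ∈ S, (fstar m u - f m u) •
        (Submodule.orthogonalProjectionOnto W (EuclideanSpace.single u (1 : ℝ)) :
          EuclideanSpace ℝ (Fin N)) := by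
      rw [← map_sub, hT]
      exact Finset.sum_congr rfl fun u _ => rfl
    have hAv : (-(β • (f m - ftil m))) v - (T (f m - ftil m)) v
        = -(β * f m v) + ∑ u ∈ S, (fstar m u - f m u) *
          (Submodule.orthogonalProjectionOnto W (EuclideanSpace.single u (1 : ℝ)) :
            EuclideanSpace ℝ (Fin N)) v := by
      rw [show (-(β • (f m - ftil m))) v - (T (f m - ftil m)) v
        = (-(β • (f m - ftil m)) - T (f m - ftil m)) v from rfl, hAeq]
      simp only [PiLp.add_apply, PiLp.sub_apply, PiLp.neg_apply, PiLp.smul_apply,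
        smul_eq_mul]
      congr 1
      rw [show (T (fstar m)) v - (T (f m)) v = (T (fstar m) - T (f m)) v from rfl, hTsub,
        euclid_sum_apply]
      apply Finset.sum_congr rfl
      intro u _
      simp [PiLp.smul_apply, smul_eq_mul]
    have hGv : (∑ u ∈ S, ∑ w : Fin N, EuclideanSpace.single w
        ((f m u - f (m - τ u w) u) *
          (Submodule.orthogonalProjectionOnto W (EuclideanSpace.single u (1 : ℝ)) :
            EuclideanSpace ℝ (Fin N)) w)) v
        = ∑ u ∈ S, (f m u - f (m - τ u v) u) *
          (Submodule.orthogonalProjectionOnto W (EuclideanSpace.single u (1 : ℝ)) :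
            EuclideanSpace ℝ (Fin N)) v := by
      rw [euclid_sum_apply]
      exact Finset.sum_congr rfl fun u _ => sum_single_eval _ v
    have hDv : (∑ u ∈ S, ∑ w : Fin N, EuclideanSpace.single w
        ((fstar (m - τ u w) u - fstar m u) *
          (Submodule.orthogonalProjectionOnto W (EuclideanSpace.single u (1 : ℝ)) :
            EuclideanSpace ℝ (Fin N)) w)) v
        = ∑ u ∈ S, (fstar (m - τ u v) u - fstar m u) *
          (Submodule.orthogonalProjectionOnto W (EuclideanSpace.single u (1 : ℝ)) :
            EuclideanSpace ℝ (Fin N)) v := by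
      rw [euclid_sum_apply]
      exact Finset.sum_congr rfl fun u _ => sum_single_eval _ v
    simp only [PiLp.sub_apply, PiLp.smul_apply, smul_eq_mul, PiLp.add_apply]
    rw [hit, hAv, hGv, hDv]
    have hsum : (∑ u ∈ S, (fstar m u - f m u) *
          (Submodule.orthogonalProjectionOnto W (EuclideanSpace.single u (1 : ℝ)) :
            EuclideanSpace ℝ (Fin N)) v)
        + (∑ u ∈ S, (f m u - f (m - τ u v) u) *
          (Submodule.orthogonalProjectionOnto W (EuclideanSpace.single u (1 : ℝ)) :
            EuclideanSpace ℝ (Fin N)) v)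
        + (∑ u ∈ S, (fstar (m - τ u v) u - fstar m u) *
          (Submodule.orthogonalProjectionOnto W (EuclideanSpace.single u (1 : ℝ)) :
            EuclideanSpace ℝ (Fin N)) v)
        = ∑ u ∈ S, (fstar (m - τ u v) u - f (m - τ u v) u) *
          (Submodule.orthogonalProjectionOnto W (EuclideanSpace.single u (1 : ℝ)) :
            EuclideanSpace ℝ (Fin N)) v := by
      rw [← Finset.sum_add_distrib, ← Finset.sum_add_distrib]
      exact Finset.sum_congr rfl fun u _ => by ring
    linear_combination -μ * hsum
  -- bound on ‖f m - ftil m‖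
  have hxbound : ‖f m - ftil m‖ ≤ e m + ep m := by
    have hP : (Submodule.orthogonalProjectionOnto W (f m - ftil m) : EuclideanSpace ℝ (Fin N))
        = (Submodule.orthogonalProjectionOnto W (f m) : EuclideanSpace ℝ (Fin N)) - ftil m := by
      rw [map_sub]
      push_cast
      have hself := Submodule.starProjection_eq_self_iff.mpr (hftil m).1
      exact congrArg (HSub.hSub _) hself
    have hsplit : f m - ftil m
        = (Submodule.orthogonalProjectionOnto W (f m - ftil m) : EuclideanSpace ℝ (Fin N))
          + (f m - (Submodule.orthogonalProjectionOnto W (f m) : EuclideanSpace ℝ (Fin N))) := by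
      rw [hP]; abel
    calc ‖f m - ftil m‖
        ≤ ‖(Submodule.orthogonalProjectionOnto W (f m - ftil m) : EuclideanSpace ℝ (Fin N))‖
          + ‖f m - (Submodule.orthogonalProjectionOnto W (f m) : EuclideanSpace ℝ (Fin N))‖ := by
          nth_rewrite 1 [hsplit]; exact norm_add_le _ _
      _ = e m + ep m := by rw [he m, hep m]
  -- bound on A
  have hA : ‖-(β • (f m - ftil m)) - T (f m - ftil m)‖ ≤ (β + ‖T‖) * (e m + ep m) := by
    have h1 : ‖-(β • (f m - ftil m)) - T (f m - ftil m)‖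
        ≤ β * ‖f m - ftil m‖ + ‖T‖ * ‖f m - ftil m‖ := by
      calc ‖-(β • (f m - ftil m)) - T (f m - ftil m)‖
          ≤ ‖-(β • (f m - ftil m))‖ + ‖T (f m - ftil m)‖ := norm_sub_le _ _
        _ ≤ β * ‖f m - ftil m‖ + ‖T‖ * ‖f m - ftil m‖ := by
            rw [norm_neg, norm_smul, Real.norm_eq_abs, abs_of_pos hβ]
            exact add_le_add le_rfl (T.le_opNorm _)
    nlinarith [norm_nonneg T, hβ.le, norm_nonneg (f m - ftil m)]
  -- bound on D
  have hD : ‖∑ u ∈ S, ∑ w : Fin N, EuclideanSpace.single w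
      ((fstar (m - τ u w) u - fstar m u) *
        (Submodule.orthogonalProjectionOnto W (EuclideanSpace.single u (1 : ℝ)) :
          EuclideanSpace ℝ (Fin N)) w)‖ ≤ S.card * (τbar * Δ) := by
    refine le_trans (norm_sum_le S _) ?_
    have hbd : ∀ u ∈ S, ‖∑ w : Fin N, EuclideanSpace.single w
        ((fstar (m - τ u w) u - fstar m u) *
          (Submodule.orthogonalProjectionOnto W (EuclideanSpace.single u (1 : ℝ)) :
            EuclideanSpace ℝ (Fin N)) w)‖ ≤ τbar * Δ := by
      intro u hu
      have hΔ0 : 0 ≤ Δ := le_trans (abs_nonneg _) (hΔ 0 u)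
      have hb : (0 : ℝ) ≤ τbar * Δ := by positivity
      have hc : ∀ w : Fin N, |fstar (m - τ u w) u - fstar m u| ≤ τbar * Δ := by
        intro w
        refine le_trans (tele (τ u w) m u) ?_
        exact mul_le_mul_of_nonneg_right (by exact_mod_cast (hτ u hu w).2 : ((τ u w : ℕ) : ℝ) ≤ (τbar : ℝ)) hΔ0
      calc ‖∑ w : Fin N, EuclideanSpace.single w
            ((fstar (m - τ u w) u - fstar m u) *
              (Submodule.orthogonalProjectionOnto W (EuclideanSpace.single u (1 : ℝ)) :
                EuclideanSpace ℝ (Fin N)) w)‖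
          ≤ (τbar * Δ) * ‖(Submodule.orthogonalProjectionOnto W (EuclideanSpace.single u (1 : ℝ)) :
              EuclideanSpace ℝ (Fin N))‖ := single_norm_bound _ _ hb _ hc
        _ ≤ (τbar * Δ) * 1 := mul_le_mul_of_nonneg_left (hδnorm u) hb
        _ = τbar * Δ := mul_one _
    calc (∑ u ∈ S, ‖∑ w : Fin N, EuclideanSpace.single w
          ((fstar (m - τ u w) u - fstar m u) *
            (Submodule.orthogonalProjectionOnto W (EuclideanSpace.single u (1 : ℝ)) :
              EuclideanSpace ℝ (Fin N)) w)‖)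
        ≤ S.card • (τbar * Δ) := Finset.sum_le_card_nsmul S _ _ hbd
      _ = S.card * (τbar * Δ) := by rw [nsmul_eq_mul]
  -- G is η m
  have hG : ‖∑ u ∈ S, ∑ w : Fin N, EuclideanSpace.single w
      ((f m u - f (m - τ u w) u) *
        (Submodule.orthogonalProjectionOnto W (EuclideanSpace.single u (1 : ℝ)) :
          EuclideanSpace ℝ (Fin N)) w)‖ = η m := (hη m).symm
  -- conclude
  calc ‖f k - f m‖
      = μ * ‖(-(β • (f m - ftil m)) - T (f m - ftil m))
        + (∑ u ∈ S, ∑ w : Fin N, EuclideanSpace.single w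
            ((f m u - f (m - τ u w) u) *
              (Submodule.orthogonalProjectionOnto W (EuclideanSpace.single u (1 : ℝ)) :
                EuclideanSpace ℝ (Fin N)) w))
        + (∑ u ∈ S, ∑ w : Fin N, EuclideanSpace.single w
            ((fstar (m - τ u w) u - fstar m u) *
              (Submodule.orthogonalProjectionOnto W (EuclideanSpace.single u (1 : ℝ)) :
                EuclideanSpace ℝ (Fin N)) w))‖ := by
        rw [key, norm_smul, Real.norm_eq_abs, abs_of_pos hμ]
    _ ≤ μ * (‖-(β • (f m - ftil m)) - T (f m - ftil m)‖
        + ‖∑ u ∈ S, ∑ w : Fin N, EuclideanSpace.single w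
            ((f m u - f (m - τ u w) u) *
              (Submodule.orthogonalProjectionOnto W (EuclideanSpace.single u (1 : ℝ)) :
                EuclideanSpace ℝ (Fin N)) w)‖
        + ‖∑ u ∈ S, ∑ w : Fin N, EuclideanSpace.single w
            ((fstar (m - τ u w) u - fstar m u) *
              (Submodule.orthogonalProjectionOnto W (EuclideanSpace.single u (1 : ℝ)) :
                EuclideanSpace ℝ (Fin N)) w)‖) :=
        mul_le_mul_of_nonneg_left (norm_add₃_le) hμ.le
    _ ≤ μ * ((β + ‖T‖) * (e m + ep m) + η m + S.card * (τbar * Δ)) := by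
        rw [hG] at *
        have := add_le_add (add_le_add hA (le_refl (η m))) hD
        exact mul_le_mul_of_nonneg_left this hμ.le
    _ = μ * ((β + ‖T‖) * (e m + ep m) + η m) + μ * S.card * τbar * Δ := by ring
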